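/- If G is a finite group, H ≤ G, and the interval [H,G] is top Boolean (i.e., the interval [T,G] is Boolean, where T is the intersection of all maximal subgroups of G containing H), then there exists g ∈ G with ⟨H,g⟩ = G. -/

import Mathlib

/-- If `[H, G]` is top Boolean (i.e. the interval `[T, G]` is Boolean, where `T` is the
intersection of all maximal subgroups of `G` containing `H`), then there exists `g ∈ G`
with `⟨H, g⟩ = G`. -/
theorem w_cyclic_of_top_boolean (G : Type*) [Group G] [Fintype G] (H T : Subgroup G)
    (hT : T = ⨅ M ∈ {M : Subgroup G | H ≤ M ∧ IsCoatom M}, M)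
    (hBool : ∃ n : ℕ, Nonempty ((Set.Icc T (⊤ : Subgroup G)) ≃o Set (Fin n))) :
    ∃ g : G, H ⊔ Subgroup.zpowers g = ⊤ := by
  classical
  obtain ⟨n, ⟨e⟩⟩ := hBool
  set S : Set (Subgroup G) := {M : Subgroup G | H ≤ M ∧ IsCoatom M} with hS
  have hTle : ∀ M ∈ S, T ≤ M := by
    intro M hM
    rw [hT]
    exact biInf_le _ hM
  have memIcc : ∀ M ∈ S, M ∈ Set.Icc T (⊤ : Subgroup G) := fun M hM => ⟨hTle M hM, le_top⟩
  have hTopmem : (⊤ : Subgroup G) ∈ Set.Icc T (⊤ : Subgroup G) := ⟨le_top, le_rfl⟩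
  -- e sends ⊤ to univ
  have etop : (e ⟨⊤, hTopmem⟩ : Set (Fin n)) = Set.univ := by
    apply Set.eq_univ_of_univ_subset
    have h1 : e.symm Set.univ ≤ ⟨⊤, hTopmem⟩ := by
      have : ((e.symm Set.univ : Set.Icc T (⊤ : Subgroup G)) : Subgroup G) ≤ (⊤ : Subgroup G) :=
        le_top
      exact this
    have h2 := e.monotone h1
    rwa [e.apply_symm_apply] at h2
  -- each member of S maps to the complement of a singleton
  have coa : ∀ M, ∀ hM : M ∈ S, ∃ i : Fin n,
      (e ⟨M, memIcc M hM⟩ : Set (Fin n)) = ({i}ᶜ : Set (Fin n)) := by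
    intro M hM
    have hMne : M ≠ ⊤ := hM.2.1
    have hne : (e ⟨M, memIcc M hM⟩ : Set (Fin n)) ≠ Set.univ := by
      intro h
      apply hMne
      have h1 : e ⟨⊤, hTopmem⟩ ≤ e ⟨M, memIcc M hM⟩ := by rw [etop, h]
      have h2 : (⟨⊤, hTopmem⟩ : Set.Icc T (⊤ : Subgroup G)) ≤ ⟨M, memIcc M hM⟩ :=
        e.le_iff_le.mp h1
      exact le_antisymm le_top h2
    obtain ⟨i, hi⟩ : ∃ i : Fin n, i ∉ (e ⟨M, memIcc M hM⟩ : Set (Fin n)) := by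
      by_contra hcon
      push_neg at hcon
      exact hne (Set.eq_univ_of_forall hcon)
    refine ⟨i, ?_⟩
    set u := e.symm ({i}ᶜ : Set (Fin n)) with hu
    have heu : (e u : Set (Fin n)) = {i}ᶜ := e.apply_symm_apply _
    have hMu : (⟨M, memIcc M hM⟩ : Set.Icc T (⊤ : Subgroup G)) ≤ u := by
      apply e.le_iff_le.mp
      rw [heu]
      intro j hj
      simp only [Set.mem_compl_iff, Set.mem_singleton_iff]
      rintro rfl
      exact hi hj
    have huval : (u : Subgroup G) = M := by
      have hMu' : M ≤ (u : Subgroup G) := hMu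
      rcases lt_or_eq_of_le hMu' with h | h
      · exfalso
        have : (u : Subgroup G) = ⊤ := hM.2.2 _ h
        have hu2 : u = ⟨⊤, hTopmem⟩ := Subtype.ext this
        rw [hu2] at heu
        rw [etop] at heu
        have : i ∈ ({i}ᶜ : Set (Fin n)) := by rw [← heu]; trivial
        exact this rfl
      · exact h.symm
    have : u = ⟨M, memIcc M hM⟩ := Subtype.ext huval
    rw [← heu, this]
  choose c hc using coa
  have cinj : ∀ M hM M' hM', c M hM = c M' hM' → M = M' := by
    intro M hM M' hM' h
    have : (e ⟨M, memIcc M hM⟩ : Set (Fin n)) = e ⟨M', memIcc M' hM'⟩ := by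
      rw [hc M hM, hc M' hM', h]
    have := e.injective this
    exact congrArg Subtype.val this
  -- key: for each M in S there is y outside M but inside every other member of S
  have key : ∀ M, M ∈ S → ∃ y : G, y ∉ M ∧ ∀ M' ∈ S, M' ≠ M → y ∈ M' := by
    intro M hM
    set B := e.symm ({c M hM} : Set (Fin n)) with hB
    have heB : (e B : Set (Fin n)) = {c M hM} := e.apply_symm_apply _
    have hnotle : ¬ ((B : Subgroup G) ≤ M) := by
      intro h
      have h1 : B ≤ ⟨M, memIcc M hM⟩ := h
      have h2 := e.monotone h1
      rw [heB, hc M hM] at h2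
      exact (h2 rfl) rfl
    obtain ⟨y, hyB, hyM⟩ : ∃ y, y ∈ (B : Subgroup G) ∧ y ∉ M := by
      by_contra hcon
      push_neg at hcon
      exact hnotle hcon
    refine ⟨y, hyM, ?_⟩
    intro M' hM' hne
    have hle : B ≤ ⟨M', memIcc M' hM'⟩ := by
      apply e.le_iff_le.mp
      rw [heB, hc M' hM']
      intro j hj
      simp only [Set.mem_singleton_iff] at hj
      subst hj
      simp only [Set.mem_compl_iff, Set.mem_singleton_iff]
      intro h
      exact hne (cinj M' hM' M hM h.symm)
    exact (hle : (B : Subgroup G) ≤ M') hyB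
  -- pick the elements
  set x : Subgroup G → G := fun M => if h : M ∈ S then (key M h).choose else 1 with hx
  have hx1 : ∀ M (hM : M ∈ S), x M ∉ M := by
    intro M hM
    simp only [hx, dif_pos hM]
    exact (key M hM).choose_spec.1
  have hx2 : ∀ M (hM : M ∈ S), ∀ M' ∈ S, M' ≠ M → x M ∈ M' := by
    intro M hM
    simp only [hx, dif_pos hM]
    exact (key M hM).choose_spec.2
  -- the finite list of members of S
  have hSfin : S.Finite := Set.toFinite S
  set l : List (Subgroup G) := hSfin.toFinset.toList with hl
  have hlnd : l.Nodup := Finset.nodup_toList _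
  have hlmem : ∀ N, N ∈ l ↔ N ∈ S := by
    intro N
    rw [hl, Finset.mem_toList, Set.Finite.mem_toFinset]
  -- the product avoids every member of S
  have prodlem : ∀ (t : List (Subgroup G)), t.Nodup → (∀ N ∈ t, N ∈ S) →
      ∀ M ∈ t, (t.map x).prod ∉ M := by
    intro t
    induction t with
    | nil => intro _ _ M hM; exact absurd hM List.not_mem_nil
    | cons N u ih =>
      intro hnd hmem M hM
      have hNS : N ∈ S := hmem N List.mem_cons_self
      have hNu : N ∉ u := (List.nodup_cons.mp hnd).1
      have hund : u.Nodup := (List.nodup_cons.mp hnd).2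
      simp only [List.map_cons, List.prod_cons]
      rcases List.mem_cons.mp hM with rfl | hMu
      · -- M = N
        have hrest : (u.map x).prod ∈ M := by
          apply Subgroup.list_prod_mem
          intro z hz
          obtain ⟨N', hN', rfl⟩ := List.mem_map.mp hz
          have hN'S : N' ∈ S := hmem N' (List.mem_cons_of_mem _ hN')
          have : M ≠ N' := by rintro rfl; exact hNu hN'
          exact hx2 N' hN'S M hNS this
        intro h
        have : x M ∈ M := by
          have := mul_mem h (inv_mem hrest)
          rwa [mul_inv_cancel_right] at this
        exact hx1 M hNS this
      · -- M ∈ u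
        have hMS : M ∈ S := hmem M (List.mem_cons_of_mem _ hMu)
        have hxN : x N ∈ M := by
          apply hx2 N hNS M hMS
          rintro rfl
          exact hNu hMu
        intro h
        have : (u.map x).prod ∈ M := by
          have := mul_mem (inv_mem hxN) h
          rwa [inv_mul_cancel_left] at this
        exact ih hund (fun N' hN' => hmem N' (List.mem_cons_of_mem _ hN')) M hMu this
  set g : G := (l.map x).prod with hg
  refine ⟨g, ?_⟩
  by_contra hcon
  obtain ⟨M, hMco, hMle⟩ := (eq_top_or_exists_le_coatom (H ⊔ Subgroup.zpowers g)).resolve_left hcon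
  have hMS : M ∈ S := ⟨le_trans le_sup_left hMle, hMco⟩
  have hgM : g ∈ M := hMle (le_sup_right (a := H) (Subgroup.mem_zpowers g))
  exact prodlem l hlnd (fun N hN => (hlmem N).mp hN) M ((hlmem M).mpr hMS) hgM
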